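/- arXiv:1810.09335 — 3 statements merged into one kernel-verified Lean document; each statement's English description precedes it below -/
import Mathlib

section
/- In a pre-ordered residuated system, if k is a supremal element for a subset Z, then a·k is a supremal element for the set aZ = {a·z : z ∈ Z}. -/
theorem stmt_16 {A : Type*} [CommMonoid A] (le : A → A → Prop) (arr : A → A → A)
    (hrefl : ∀ x : A, le x x)
    (htrans : ∀ x y z : A, le x y → le y z → le x z)
    (hle1 : ∀ x : A, le x 1)
    (hres : ∀ x y z : A, le (x * y) z ↔ le x (arr y z)) :

    ∀ (Z : Set A) (k a : A),
      ((∀ z ∈ Z, le z k) ∧ ∀ w : A, w ≠ k → (∀ z ∈ Z, le z w) → le k w) →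
      ((∀ u ∈ (fun z => a * z) '' Z, le u (a * k)) ∧
        ∀ w : A, w ≠ a * k → (∀ u ∈ (fun z => a * z) '' Z, le u w) → le (a * k) w) := by
  intro Z k a ⟨hub, hsup⟩
  constructor
  · rintro u ⟨z, hz, rfl⟩
    have h1 : le (k * a) (a * k) := by rw [mul_comm]; exact hrefl _
    have h2 : le k (arr a (a * k)) := (hres _ _ _).mp h1
    have h3 : le z (arr a (a * k)) := htrans _ _ _ (hub z hz) h2
    have h4 : le (z * a) (a * k) := (hres _ _ _).mpr h3
    simpa [mul_comm] using h4
  · intro w hw hub'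
    have hk : le k (arr a w) := by
      by_cases h : arr a w = k
      · rw [h]; exact hrefl _
      · refine hsup _ h fun z hz => ?_
        have := hub' (a * z) ⟨z, hz, rfl⟩
        exact (hres _ _ _).mp (by simpa [mul_comm] using this)
    have := (hres _ _ _).mpr hk
    simpa [mul_comm] using this
end

section
/- In a residuated quasi-directoid, the induced relation x ≼ y iff x ⊔ y = y is a pre-order, and the induced relational system ⟨A, ·, →, 1, ≼⟩ is a pre-ordered residuated system. -/
theorem stmt_17 {A : Type*} [CommMonoid A] (arr : A → A → A) (j : A → A → A)
    (h1 : ∀ x : A, j x x = x)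
    (h2 : ∀ x y : A, j x (j x y) = j x y)
    (h3 : ∀ x y : A, j y (j x y) = j x y)
    (h4 : ∀ x y z : A, j x (j (j x y) z) = j (j x y) z)
    (h5 : ∀ x : A, j x 1 = 1)
    (h6 : ∀ x y z : A, j (x * y) z = z ↔ j x (arr y z) = arr y z)
    (le : A → A → Prop) (hle : ∀ x y : A, le x y ↔ j x y = y) :
    (∀ x : A, le x x) ∧
    (∀ x y z : A, le x y → le y z → le x z) ∧
    (∀ x : A, le x 1) ∧
    (∀ x y z : A, le (x * y) z ↔ le x (arr y z)) := by
  refine ⟨fun x => (hle x x).2 (h1 x), fun x y z hxy hyz => ?_, fun x => (hle x 1).2 (h5 x),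
    fun x y z => by rw [hle, hle]; exact h6 x y z⟩
  rw [hle] at hxy hyz ⊢
  have := h4 x y z
  rw [hxy, hyz] at this
  exact this
end

section
/- In a pre-ordered residuated system with 0 satisfying the law of double negation x'' = x (where x' = x → 0), it holds that x → y ≼ (x·y')' and (x·y')' ≼ x → y, and also y' → x' ≼ x → y, for all x, y. -/
theorem stmt_19 {A : Type*} [CommMonoid A] (le : A → A → Prop) (arr : A → A → A)
    (z0 : A)
    (hrefl : ∀ x : A, le x x)
    (htrans : ∀ x y z : A, le x y → le y z → le x z)
    (hle1 : ∀ x : A, le x 1)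
    (hres : ∀ x y z : A, le (x * y) z ↔ le x (arr y z))
    (hz : ∀ x : A, z0 * x = z0 ∧ x * z0 = z0)
    (hdn : ∀ x : A, arr (arr x z0) z0 = x) :
    ∀ x y : A,
      le (arr x y) (arr (x * arr y z0) z0) ∧
      le (arr (x * arr y z0) z0) (arr x y) ∧
      le (arr (arr y z0) (arr x z0)) (arr x y) := by
  -- monotonicity of multiplication
  have mono : ∀ a b c : A, le a b → le (a * c) (b * c) := by
    intro a b c h
    have hb : le b (arr c (b * c)) := (hres b c (b * c)).mp (hrefl _)
    exact (hres a c (b * c)).mpr (htrans _ _ _ h hb)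
  -- modus ponens: (x → y) * x ≼ y
  have mp : ∀ x y : A, le (arr x y * x) y := fun x y => (hres _ _ _).mpr (hrefl _)
  intro x y
  refine ⟨?_, ?_, ?_⟩
  · rw [← hres]
    have h1 : le (arr x y * (x * arr y z0)) (y * arr y z0) := by
      rw [← mul_assoc]
      exact mono _ _ (arr y z0) (mp x y)
    have h2 : le (y * arr y z0) z0 := by
      rw [mul_comm]; exact mp y z0
    exact htrans _ _ _ h1 h2
  · rw [← hres]
    conv_rhs => rw [← hdn y]
    rw [← hres]
    have : le (arr (x * arr y z0) z0 * x * arr y z0) (arr (x * arr y z0) z0 * (x * arr y z0)) := by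
      rw [mul_assoc]; exact hrefl _
    exact htrans _ _ _ this (mp _ _)
  · rw [← hres]
    conv_rhs => rw [← hdn y]
    rw [← hres]
    have h1 : le (arr (arr y z0) (arr x z0) * x * arr y z0)
        (arr (arr y z0) (arr x z0) * arr y z0 * x) := by
      rw [mul_assoc, mul_assoc, mul_comm x]; exact hrefl _
    have h2 : le (arr (arr y z0) (arr x z0) * arr y z0 * x) (arr x z0 * x) :=
      mono _ _ x (mp _ _)
    exact htrans _ _ _ h1 (htrans _ _ _ h2 (mp _ _))
end
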